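/- The Apollonian group A_n is not a discrete subgroup of GL(n+2, ℝ) for n ≥ 4: the identity matrix is a limit point of the set {(S_1 S_2)^k : k ≥ 1} but this set does not contain the identity. -/

import Mathlib

open Matrix

/-- Descartes quadratic form matrix in dimension `n`. -/
noncomputable def QD (n : ℕ) : Matrix (Fin (n+2)) (Fin (n+2)) ℝ :=
  1 - (n : ℝ)⁻¹ • Matrix.of (fun _ _ => (1 : ℝ))

/-- Wilker quadratic form matrix in dimension `n`. -/
def QW (n : ℕ) : Matrix (Fin (n+2)) (Fin (n+2)) ℝ :=
  Matrix.of (fun i j =>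
    if (i = 0 ∧ j = 1) ∨ (i = 1 ∧ j = 0) then (-4 : ℝ)
    else if i = j then (if 2 ≤ (i : ℕ) then 2 else 0) else 0)

/-- Apollonian group generator `S j` in dimension `n`. -/
noncomputable def S (n : ℕ) (j : Fin (n+2)) : Matrix (Fin (n+2)) (Fin (n+2)) ℝ :=
  Matrix.of (fun i k =>
    if i = j then (if k = j then -1 else 2 / ((n : ℝ) - 1))
    else if i = k then 1 else 0)

/-- Dual Apollonian group generator `S j ^⊥` in dimension `n`. -/
def Sperp (n : ℕ) (j : Fin (n+2)) : Matrix (Fin (n+2)) (Fin (n+2)) ℝ :=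
  Matrix.of (fun i k =>
    if k = j then (if i = j then -1 else 2)
    else if i = k then 1 else 0)

namespace Apo
open Real

noncomputable def c (n : ℕ) : ℝ := 2 / ((n : ℝ) - 1)
noncomputable def xx (n : ℕ) : ℝ := (c n)^2 / 2 - 1
noncomputable def th (n : ℕ) : ℝ := Real.arccos (xx n)
noncomputable def ss (n : ℕ) : ℝ := Real.sin (th n)
noncomputable def lam (n : ℕ) : ℝ := c n / (c n - 2)

noncomputable def U (n : ℕ) : Matrix (Fin (n+2)) (Fin (n+2)) ℝ :=
  Matrix.of fun i k =>
    if i = 0 then (if k = 0 then 1 else if k = 1 then 0 else lam n)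
    else if i = 1 then (if k = 0 then 0 else if k = 1 then 1 else lam n)
    else 0

noncomputable def V (n : ℕ) : Matrix (Fin (n+2)) (Fin (n+2)) ℝ :=
  Matrix.of fun i k =>
    if i = 0 then (if k = 0 then (c n)^2/(2*ss n) else if k = 1 then -(c n/ss n) else (c n)^2/(2*ss n))
    else if i = 1 then (if k = 0 then c n/ss n else -((c n)^2/(2*ss n)))
    else 0

lemma fin2 (n : ℕ) (i : Fin (n+2)) : i = 0 ∨ i = 1 ∨ ∃ l : Fin n, i = l.succ.succ := by
  induction i using Fin.cases with
  | zero => exact Or.inl rfl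
  | succ j =>
    induction j using Fin.cases with
    | zero => exact Or.inr (Or.inl rfl)
    | succ l => exact Or.inr (Or.inr ⟨l, rfl⟩)

lemma succ_succ_ne_zero (n : ℕ) (l : Fin n) : (l.succ.succ : Fin (n+2)) ≠ 0 := Fin.succ_ne_zero _
lemma succ_succ_ne_one (n : ℕ) (l : Fin n) : (l.succ.succ : Fin (n+2)) ≠ 1 := by
  simp [Fin.ext_iff, Fin.val_succ]

lemma mulU (n : ℕ) (A B : Matrix (Fin (n+2)) (Fin (n+2)) ℝ)
    (hB : ∀ (l : Fin n) (k : Fin (n+2)), B l.succ.succ k = 0) (i k : Fin (n+2)) :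
    (A * B) i k = A i 0 * B 0 k + A i 1 * B 1 k := by
  rw [Matrix.mul_apply, Fin.sum_univ_succ, Fin.sum_univ_succ]
  simp [hB, Fin.succ_zero_eq_one]

lemma Urows (n : ℕ) (l : Fin n) (k : Fin (n+2)) : U n l.succ.succ k = 0 := by
  simp [U, succ_succ_ne_zero, succ_succ_ne_one]

lemma Vrows (n : ℕ) (l : Fin n) (k : Fin (n+2)) : V n l.succ.succ k = 0 := by
  simp [V, succ_succ_ne_zero, succ_succ_ne_one]

lemma hn1 {n : ℕ} (hn : 4 ≤ n) : (3:ℝ) ≤ (n : ℝ) - 1 := by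
  have : (4:ℝ) ≤ (n:ℝ) := by exact_mod_cast hn
  linarith

lemma hc0 {n : ℕ} (hn : 4 ≤ n) : 0 < c n := by
  have := hn1 hn; unfold c; positivity

lemma hc23 {n : ℕ} (hn : 4 ≤ n) : c n ≤ 2/3 := by
  have h := hn1 hn
  unfold c
  rw [div_le_div_iff₀ (by linarith) (by norm_num)]
  linarith

lemma hxlb {n : ℕ} (hn : 4 ≤ n) : -1 < xx n := by
  have := hc0 hn
  unfold xx; nlinarith

lemma hxub {n : ℕ} (hn : 4 ≤ n) : xx n < 1 := by
  have h1 := hc0 hn; have h2 := hc23 hn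
  unfold xx; nlinarith

lemma hcos {n : ℕ} (hn : 4 ≤ n) : Real.cos (th n) = xx n :=
  Real.cos_arccos (le_of_lt (hxlb hn)) (le_of_lt (hxub hn))

lemma hs0 {n : ℕ} (hn : 4 ≤ n) : 0 < ss n := by
  unfold ss th
  rw [Real.sin_arccos]
  have h1 := hxlb hn; have h2 := hxub hn
  apply Real.sqrt_pos.2; nlinarith

lemma hss {n : ℕ} (hn : 4 ≤ n) : ss n ^ 2 = 1 - xx n ^ 2 := by
  unfold ss
  rw [Real.sin_sq, hcos hn]

lemma hc2ne {n : ℕ} (hn : 4 ≤ n) : c n - 2 ≠ 0 := by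
  have h2 := hc23 hn; intro h; linarith

lemma hsne {n : ℕ} (hn : 4 ≤ n) : ss n ≠ 0 := (hs0 hn).ne'

lemma hss2 {n : ℕ} (hn : 4 ≤ n) : ss n ^ 2 = (c n)^2 * (4 - (c n)^2) / 4 := by
  rw [hss hn]; unfold xx; ring

lemma hUU (n : ℕ) : U n * U n = U n := by
  ext i k
  rw [mulU n _ _ (Urows n)]
  rcases fin2 n i with hi | hi | ⟨l, hi⟩ <;> rcases fin2 n k with hk | hk | ⟨m, hk⟩ <;>
    subst hi <;> subst hk <;>
    simp [U, succ_succ_ne_zero, succ_succ_ne_one]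

lemma hUV (n : ℕ) : U n * V n = V n := by
  ext i k
  rw [mulU n _ _ (Vrows n)]
  rcases fin2 n i with hi | hi | ⟨l, hi⟩ <;> rcases fin2 n k with hk | hk | ⟨m, hk⟩ <;>
    subst hi <;> subst hk <;>
    simp [U, V, succ_succ_ne_zero, succ_succ_ne_one]

lemma hVU {n : ℕ} (hn : 4 ≤ n) : V n * U n = V n := by
  have h1 := hc2ne hn
  have h2 := hsne hn
  have h5 : c n * ss n - ss n * 2 ≠ 0 := by
    have h6 := mul_ne_zero h1 h2
    intro h; apply h6; linear_combination h
  have h7 : c n * ss n * 2 - ss n * 4 ≠ 0 := by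
    have h6 := mul_ne_zero (mul_ne_zero h1 h2) (two_ne_zero (α := ℝ))
    intro h; apply h6; linear_combination h
  ext i k
  rw [mulU n _ _ (Urows n)]
  rcases fin2 n i with hi | hi | ⟨l, hi⟩ <;> rcases fin2 n k with hk | hk | ⟨m, hk⟩ <;>
    subst hi <;> subst hk <;>
    simp [U, V, lam, succ_succ_ne_zero, succ_succ_ne_one] <;>
    field_simp <;> ring

lemma hVV {n : ℕ} (hn : 4 ≤ n) : V n * V n = -(U n) := by
  have h1 := hc2ne hn
  have h2 := hsne hn
  have h3 := hss2 hn
  have h4 := (hc0 hn).ne'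
  ext i k
  rw [mulU n _ _ (Vrows n)]
  rcases fin2 n i with hi | hi | ⟨l, hi⟩ <;> rcases fin2 n k with hk | hk | ⟨m, hk⟩ <;>
    subst hi <;> subst hk <;>
    simp [U, V, lam, succ_succ_ne_zero, succ_succ_ne_one] <;>
    field_simp <;>
    first
      | ring1
      | linear_combination (4 * ss n ^ 2) * h3
      | linear_combination (8 * c n * ss n ^ 2) * h3
      | linear_combination (4:ℝ) * h3
      | linear_combination (-4:ℝ) * h3
      | linear_combination (4 - 8 * c n * ss n ^ 2) * h3
      | linear_combination (4 - 8 * c n * ss n ^ 2 + 4 * ss n ^ 2) * h3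
      | linear_combination (4 + 4 * ss n ^ 2) * h3
      | linear_combination (-4 - 4 * ss n ^ 2) * h3
      | linear_combination (8 * c n * ss n ^ 2 - 4) * h3
      | linear_combination (8 * c n * ss n ^ 2 - 4 - 4 * ss n ^ 2) * h3
      | linear_combination (-(4:ℝ) * ss n ^ 2) * h3
      | linear_combination (-8 * c n * ss n ^ 2) * h3

lemma hSc (n : ℕ) (j : Fin (n+2)) : S n j =
    Matrix.of (fun i k => if i = j then (if k = j then -1 else c n)
      else if i = k then 1 else 0) := rfl

lemma hM {n : ℕ} (hn : 4 ≤ n) : S n 0 * S n 1 = 1 + (xx n - 1) • U n + ss n • V n := by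
  have h1 := hc2ne hn
  have h2 := hsne hn
  ext i k
  rw [hSc, hSc, Matrix.mul_apply, Fin.sum_univ_succ, Fin.sum_univ_succ]
  rcases fin2 n i with hi | hi | ⟨l, hi⟩ <;> rcases fin2 n k with hk | hk | ⟨m, hk⟩ <;>
    subst hi <;> subst hk <;>
    simp [U, V, Matrix.one_apply, Matrix.add_apply, Matrix.smul_apply,
      succ_succ_ne_zero, succ_succ_ne_one, Fin.succ_zero_eq_one, Fin.succ_inj,
      Finset.sum_ite_eq, Finset.sum_ite_eq', (succ_succ_ne_zero n _).symm,
      (succ_succ_ne_one n _).symm, Fin.succ_ne_zero] <;>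
    (try simp only [xx, lam]) <;> (try field_simp) <;> (try ring1)

lemma mul_expand {n : ℕ} (hn : 4 ≤ n) (a b a' b' : ℝ) :
    (1 + a • U n + b • V n) * (1 + a' • U n + b' • V n)
      = 1 + (a + a' + a*a' - b*b') • U n + (b + b' + a*b' + b*a') • V n := by
  simp only [mul_add, add_mul, one_mul, mul_one, Matrix.smul_mul, Matrix.mul_smul,
    smul_smul, hUU n, hUV n, hVU hn, hVV hn, smul_neg]
  module

lemma closed {n : ℕ} (hn : 4 ≤ n) (k : ℕ) :
    (S n 0 * S n 1) ^ k
      = 1 + (Real.cos (k * th n) - 1) • U n + Real.sin (k * th n) • V n := by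
  induction k with
  | zero => simp
  | succ k ih =>
    have e1 : Real.cos (((k+1 : ℕ) : ℝ) * th n) - 1
        = (Real.cos (k * th n) - 1) + (xx n - 1)
          + (Real.cos (k * th n) - 1) * (xx n - 1)
          - Real.sin (k * th n) * ss n := by
      push_cast
      rw [add_mul, one_mul, Real.cos_add, ← hcos hn]
      unfold ss
      ring
    have e2 : Real.sin (((k+1 : ℕ) : ℝ) * th n)
        = Real.sin (k * th n) + ss n + (Real.cos (k * th n) - 1) * ss n
          + Real.sin (k * th n) * (xx n - 1) := by
      push_cast
      rw [add_mul, one_mul, Real.sin_add, ← hcos hn]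
      unfold ss
      ring
    rw [pow_succ, ih, hM hn, mul_expand hn, e1, e2]

noncomputable def tq (n : ℕ) : ℚ := 4 / (((n:ℚ) - 1)^2) - 2

noncomputable def recQ (n : ℕ) : ℕ → ℚ
  | 0 => 2
  | 1 => tq n
  | (k+2) => tq n * recQ n (k+1) - recQ n k

noncomputable def AZ (n : ℕ) : ℕ → ℤ
  | 0 => 2
  | 1 => (tq n).num
  | (k+2) => (tq n).num * AZ n (k+1) - ((tq n).den : ℤ)^2 * AZ n k

lemma tq_real {n : ℕ} (hn : 4 ≤ n) : ((tq n : ℚ) : ℝ) = 2 * Real.cos (th n) := by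
  have h := hn1 hn
  rw [hcos hn]
  unfold tq xx c
  push_cast
  have h0 : ((n:ℝ) - 1) ≠ 0 := by linarith
  field_simp
  ring

lemma recQ_real {n : ℕ} (hn : 4 ≤ n) : ∀ k : ℕ, ((recQ n k : ℚ) : ℝ) = 2 * Real.cos (k * th n) := by
  intro k
  induction k using Nat.twoStepInduction with
  | zero => simp [recQ]
  | one => simpa [recQ] using tq_real hn
  | more k ih0 ih1 =>
    have key : Real.cos (((k:ℝ)+2) * th n) + Real.cos ((k:ℝ) * th n)
        = 2 * Real.cos (((k:ℝ)+1) * th n) * Real.cos (th n) := by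
      have e : ((k:ℝ)+2) * th n = ((k:ℝ)+1) * th n + th n := by ring
      have e' : (k:ℝ) * th n = ((k:ℝ)+1) * th n - th n := by ring
      rw [e, e', Real.cos_add, Real.cos_sub]
      ring
    show ((tq n * recQ n (k+1) - recQ n k : ℚ) : ℝ) = _
    push_cast
    push_cast at ih0 ih1
    rw [ih1, ih0, tq_real hn]
    push_cast
    nlinarith [key]

lemma htd (n : ℕ) : tq n * ((tq n).den : ℚ) = ((tq n).num : ℚ) := by
  have hd : ((tq n).den : ℚ) ≠ 0 := by exact_mod_cast (tq n).den_nz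
  exact ((div_eq_iff hd).mp (Rat.num_div_den (tq n))).symm

lemma val (n : ℕ) : ∀ k : ℕ, recQ n k * ((tq n).den : ℚ)^k = ((AZ n k : ℤ) : ℚ) := by
  intro k
  induction k using Nat.twoStepInduction with
  | zero => simp [recQ, AZ]
  | one =>
    show tq n * ((tq n).den : ℚ)^1 = _
    rw [pow_one, htd n]
    simp [AZ]
  | more k ih0 ih1 =>
    show (tq n * recQ n (k+1) - recQ n k) * ((tq n).den : ℚ)^(k+2)
        = (((tq n).num * AZ n (k+1) - ((tq n).den : ℤ)^2 * AZ n k : ℤ) : ℚ)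
    push_cast
    linear_combination (tq n * ((tq n).den : ℚ)) * ih1
      - (((tq n).den : ℚ)^2) * ih0 + ((AZ n (k+1) : ℤ) : ℚ) * htd n

lemma coprimeAZ (n : ℕ) : ∀ k : ℕ, IsCoprime (AZ n (k+1)) (((tq n).den : ℤ)) := by
  intro k
  induction k with
  | zero =>
    show IsCoprime (tq n).num _
    rw [Int.isCoprime_iff_gcd_eq_one]
    simpa [Int.gcd] using (tq n).reduced
  | succ k ih =>
    have hnum : IsCoprime (tq n).num (((tq n).den : ℤ)) := by
      rw [Int.isCoprime_iff_gcd_eq_one]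
      simpa [Int.gcd] using (tq n).reduced
    have h1 : IsCoprime ((tq n).num * AZ n (k+1)) (((tq n).den : ℤ)) := hnum.mul_left ih
    obtain ⟨u, v, huv⟩ := h1
    refine ⟨u, v + u * (((tq n).den : ℤ)) * AZ n k, ?_⟩
    show u * ((tq n).num * AZ n (k+1) - ((tq n).den : ℤ)^2 * AZ n k) + _ = 1
    linear_combination huv

lemma tq_den_ne_one {n : ℕ} (hn : 4 ≤ n) : (tq n).den ≠ 1 := by
  have h4 : (4:ℚ) ≤ (n:ℚ) := by exact_mod_cast hn
  have h9 : (9:ℚ) ≤ ((n:ℚ) - 1)^2 := by nlinarith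
  have hpos : (0:ℚ) < ((n:ℚ) - 1)^2 := by linarith
  have hub : 4 / (((n:ℚ) - 1)^2) ≤ 4/9 := by
    rw [div_le_div_iff₀ hpos (by norm_num)]
    linarith
  have hlb : 0 < 4 / (((n:ℚ) - 1)^2) := by positivity
  have ht1 : -2 < tq n := by unfold tq; linarith
  have ht2 : tq n < -1 := by unfold tq; linarith
  intro h
  have := (Rat.den_eq_one_iff (tq n)).mp h
  rw [← this] at ht1 ht2
  have h1 : (-2 : ℤ) < (tq n).num := by exact_mod_cast ht1
  have h2 : (tq n).num < -1 := by exact_mod_cast ht2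
  omega

lemma part1 {n : ℕ} (hn : 4 ≤ n) (k : ℕ) (hk : 1 ≤ k) : (S n 0 * S n 1) ^ k ≠ 1 := by
  intro h
  have hcl := closed hn k
  rw [h] at hcl
  have hsval := hsne hn
  have hcval := (hc0 hn).ne'
  -- entry (1,0)
  have h10 := congrFun (congrFun hcl 1) 0
  have h00 := congrFun (congrFun hcl 0) 0
  simp [Matrix.one_apply, Matrix.add_apply, Matrix.smul_apply, U, V] at h10 h00
  -- h10 : 0 = sin (k θ) * (c/s)
  have hsin : Real.sin (k * th n) = 0 := by
    rcases h10 with h' | h' | h'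
    · exact h'
    · exact absurd h' hcval
    · exact absurd h' hsval
  rw [hsin, zero_mul, add_zero] at h00
  have hcos1 : Real.cos ((k : ℝ) * th n) = 1 := h00.symm
  have hrq : (recQ n k : ℚ) = 2 := by
    have := recQ_real hn k
    rw [hcos1] at this
    exact_mod_cast this
  have hAZ : (AZ n k : ℚ) = 2 * ((tq n).den : ℚ)^k := by
    rw [← val n k, hrq]
  have hAZ' : AZ n k = 2 * ((tq n).den : ℤ)^k := by exact_mod_cast hAZ
  obtain ⟨j, rfl⟩ : ∃ j, k = j + 1 := ⟨k - 1, by omega⟩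
  have hco := coprimeAZ n j
  have hdvd : (((tq n).den : ℤ)) ∣ AZ n (j+1) := by
    rw [hAZ']
    exact ⟨2 * ((tq n).den : ℤ)^j, by ring⟩
  have hunit := hco.isUnit_of_dvd' hdvd dvd_rfl
  rcases Int.isUnit_iff.mp hunit with h' | h'
  · exact tq_den_ne_one hn (by exact_mod_cast h')
  · have := (tq n).pos
    omega

noncomputable def Kb (n : ℕ) : ℝ := 1 + |lam n| + (c n)^2/(2*ss n) + c n / ss n

lemma Ucases (n : ℕ) (i k : Fin (n+2)) : U n i k = 0 ∨ U n i k = 1 ∨ U n i k = lam n := by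
  rcases fin2 n i with hi | hi | ⟨l, hi⟩ <;> rcases fin2 n k with hk | hk | ⟨m, hk⟩ <;>
    subst hi <;> subst hk <;>
    simp [U, succ_succ_ne_zero, succ_succ_ne_one]

lemma Vcases (n : ℕ) (i k : Fin (n+2)) :
    V n i k = 0 ∨ V n i k = (c n)^2/(2*ss n) ∨ V n i k = -((c n)^2/(2*ss n))
      ∨ V n i k = c n / ss n ∨ V n i k = -(c n / ss n) := by
  rcases fin2 n i with hi | hi | ⟨l, hi⟩ <;> rcases fin2 n k with hk | hk | ⟨m, hk⟩ <;>
    subst hi <;> subst hk <;>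
    simp [V, succ_succ_ne_zero, succ_succ_ne_one]

lemma hKb0 {n : ℕ} (hn : 4 ≤ n) : 0 < Kb n := by
  have hc := hc0 hn
  have hs := hs0 hn
  have h1 : (0:ℝ) ≤ |lam n| := abs_nonneg _
  have h2 : 0 < (c n)^2/(2*ss n) := by positivity
  have h3 : 0 < c n / ss n := by positivity
  unfold Kb; linarith

lemma hUb {n : ℕ} (hn : 4 ≤ n) (i k : Fin (n+2)) : |U n i k| ≤ Kb n := by
  have hc := hc0 hn
  have hs := hs0 hn
  have h1 : (0:ℝ) ≤ |lam n| := abs_nonneg _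
  have h2 : 0 < (c n)^2/(2*ss n) := by positivity
  have h3 : 0 < c n / ss n := by positivity
  rcases Ucases n i k with h | h | h <;> rw [h] <;> unfold Kb <;>
    simp [abs_of_nonneg] <;> linarith

lemma hVb {n : ℕ} (hn : 4 ≤ n) (i k : Fin (n+2)) : |V n i k| ≤ Kb n := by
  have hc := hc0 hn
  have hs := hs0 hn
  have h1 : (0:ℝ) ≤ |lam n| := abs_nonneg _
  have h2 : 0 < (c n)^2/(2*ss n) := by positivity
  have h3 : 0 < c n / ss n := by positivity
  rcases Vcases n i k with h | h | h | h | h <;> rw [h] <;> unfold Kb <;>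
    (try simp only [abs_neg, abs_zero]) <;>
    (try rw [abs_of_pos (by positivity)]) <;> linarith

lemma part2 {n : ℕ} (hn : 4 ≤ n) (ε : ℝ) (hε : 0 < ε) :
    ∃ k : ℕ, 1 ≤ k ∧ ∀ i j : Fin (n+2),
      |((S n 0 * S n 1) ^ k) i j - (1 : Matrix (Fin (n+2)) (Fin (n+2)) ℝ) i j| < ε := by
  have hK := hKb0 hn
  set δ : ℝ := min 1 (ε / (2 * Kb n)) with hδdef
  have hδ0 : 0 < δ := lt_min one_pos (by positivity)
  obtain ⟨N, hN⟩ := exists_nat_gt (2 * Real.pi / δ)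
  have hNpos : 0 < N + 1 := Nat.succ_pos N
  obtain ⟨k, hk0, hkN, hk⟩ :=
    Real.exists_nat_abs_mul_sub_round_le (th n / (2 * Real.pi)) hNpos
  set m : ℤ := round ((k : ℝ) * (th n / (2 * Real.pi))) with hmdef
  set y : ℝ := (k : ℝ) * th n - (m : ℝ) * (2 * Real.pi) with hydef
  have hπ : 0 < 2 * Real.pi := by positivity
  clear_value y m
  have hyval : y = (2 * Real.pi) * ((k : ℝ) * (th n / (2 * Real.pi)) - (m : ℝ)) := by
    rw [hydef]; field_simp
  have h2 : |y| ≤ (2 * Real.pi) * (1 / ((N:ℝ) + 2)) := by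
    rw [hyval, abs_mul, abs_of_pos hπ]
    apply mul_le_mul_of_nonneg_left _ hπ.le
    have : ((N:ℝ) + 1 + 1) = (N:ℝ) + 2 := by ring
    calc |(k : ℝ) * (th n / (2 * Real.pi)) - (m : ℝ)| ≤ 1 / (((N:ℕ)+1 : ℕ) + 1) := hk
    _ = 1 / ((N:ℝ) + 2) := by push_cast; ring_nf
  have h3 : (2 * Real.pi) * (1 / ((N:ℝ) + 2)) < δ := by
    have h4 : 2 * Real.pi < δ * ((N:ℝ) + 2) := by
      have h5 := (div_lt_iff₀ hδ0).mp hN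
      nlinarith
    rw [mul_one_div, div_lt_iff₀ (by positivity)]
    linarith
  have hyδ : |y| < δ := lt_of_le_of_lt h2 h3
  have hy1 : |y| ≤ 1 := le_trans hyδ.le (min_le_left _ _)
  have hyε : |y| ≤ ε / (2 * Kb n) := le_trans hyδ.le (min_le_right _ _)
  have hkθ : (k : ℝ) * th n = y + (m : ℝ) * (2 * Real.pi) := by rw [hydef]; ring
  have hcosb : |Real.cos ((k:ℝ) * th n) - 1| ≤ |y| := by
    rw [hkθ]
    rw [Real.cos_add_int_mul_two_pi]
    have hc1 : Real.cos y ≤ 1 := Real.cos_le_one y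
    have hc2 : 1 - y^2/2 ≤ Real.cos y := Real.one_sub_sq_div_two_le_cos
    have h0 : (0:ℝ) ≤ 1 - Real.cos y := by linarith
    rw [abs_sub_comm, abs_of_nonneg h0]
    have hsq : y^2 = |y|^2 := (sq_abs y).symm
    have h5 : |y|^2 ≤ |y| := by nlinarith [abs_nonneg y]
    linarith [abs_nonneg y]
  have hsinb : |Real.sin ((k:ℝ) * th n)| ≤ |y| := by
    rw [hkθ, Real.sin_add_int_mul_two_pi]
    exact Real.abs_sin_le_abs
  refine ⟨k, hk0, ?_⟩
  intro i j
  rw [closed hn k]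
  have hent : (1 + (Real.cos ((k:ℝ) * th n) - 1) • U n + Real.sin ((k:ℝ) * th n) • V n) i j
        - (1 : Matrix (Fin (n+2)) (Fin (n+2)) ℝ) i j
      = (Real.cos ((k:ℝ) * th n) - 1) * U n i j + Real.sin ((k:ℝ) * th n) * V n i j := by
    simp only [Matrix.add_apply, Matrix.smul_apply, smul_eq_mul]
    ring
  rw [hent]
  have hub := hUb hn i j
  have hvb := hVb hn i j
  calc |(Real.cos ((k:ℝ) * th n) - 1) * U n i j + Real.sin ((k:ℝ) * th n) * V n i j|
      ≤ |(Real.cos ((k:ℝ) * th n) - 1) * U n i j| + |Real.sin ((k:ℝ) * th n) * V n i j| :=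
        abs_add_le _ _
    _ = |Real.cos ((k:ℝ) * th n) - 1| * |U n i j| + |Real.sin ((k:ℝ) * th n)| * |V n i j| := by
        rw [abs_mul, abs_mul]
    _ ≤ |y| * Kb n + |y| * Kb n := by
        apply add_le_add
        · exact mul_le_mul hcosb hub (abs_nonneg _) (abs_nonneg _)
        · exact mul_le_mul hsinb hvb (abs_nonneg _) (abs_nonneg _)
    _ = 2 * Kb n * |y| := by ring
    _ < ε := by
        have : 2 * Kb n * |y| ≤ 2 * Kb n * (ε / (2 * Kb n)) := by
          apply mul_le_mul_of_nonneg_left hyε (by positivity)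
        have heq : 2 * Kb n * (ε / (2 * Kb n)) = ε := by field_simp
        -- strict: |y| < δ ≤ ε/(2Kb)
        have hstrict : 2 * Kb n * |y| < 2 * Kb n * δ :=
          (mul_lt_mul_iff_right₀ (by positivity)).mpr hyδ
        have hδε : δ ≤ ε / (2 * Kb n) := min_le_right _ _
        have : 2 * Kb n * δ ≤ ε := by
          rw [← heq]
          apply mul_le_mul_of_nonneg_left hδε (by positivity)
        linarith

end Apo

theorem apollonian_not_discrete (n : ℕ) (hn : 4 ≤ n) :
    (∀ k : ℕ, 1 ≤ k → (S n 0 * S n 1) ^ k ≠ 1) ∧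
    (∀ ε : ℝ, 0 < ε → ∃ k : ℕ, 1 ≤ k ∧
      ∀ i j : Fin (n+2), |((S n 0 * S n 1) ^ k) i j - (1 : Matrix (Fin (n+2)) (Fin (n+2)) ℝ) i j| < ε) :=
  ⟨fun k hk => Apo.part1 hn k hk, fun ε hε => Apo.part2 hn ε hε⟩
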